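/- For every R > 0, the family indexed by nonzero lattice points n ∈ ℤ² \ {0} with terms (1/(π‖n‖²)) J₂(‖n‖√R) is absolutely summable; moreover there is a constant C such that the sum of the absolute values is at most C·R^{-1/4} for all R ≥ 1. -/

import Mathlib

open Real MeasureTheory

/-- The Bessel function `J_m` for a nonnegative integer `m`,
defined by `J_m(x) = (1/π) ∫₀^π cos(mθ − x sin θ) dθ`. -/
noncomputable def besselJ (m : ℕ) (x : ℝ) : ℝ :=
  (1 / π) * ∫ θ in (0:ℝ)..π, Real.cos (m * θ - x * Real.sin θ)

/-- The Euclidean norm of a lattice point `n ∈ ℤ²`. -/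
noncomputable def znorm (n : ℤ × ℤ) : ℝ :=
  Real.sqrt ((n.1 : ℝ) ^ 2 + (n.2 : ℝ) ^ 2)

set_option maxHeartbeats 4000000

open intervalIntegral in
lemma side_bound {x a b : ℝ} (hx : 0 ≤ x) (hab : a ≤ b) (ha : 0 ≤ a) (hb : b ≤ π)
    (hg : ∀ θ ∈ Set.Icc a b, 2 - x * Real.cos θ ≠ 0) :
    |∫ θ in a..b, Real.cos (2 * θ - x * Real.sin θ)| ≤
      1 / |2 - x * Real.cos a| + 1 / |2 - x * Real.cos b| +
      (1 / (2 - x * Real.cos a) - 1 / (2 - x * Real.cos b)) := by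
  have huIcc : Set.uIcc a b = Set.Icc a b := Set.uIcc_of_le hab
  set g : ℝ → ℝ := fun θ => 2 - x * Real.cos θ with hgdef
  have hgc : Continuous g := by continuity
  -- derivative facts
  have hphi : ∀ θ : ℝ, HasDerivAt (fun θ => 2 * θ - x * Real.sin θ) (g θ) θ := by
    intro θ
    simpa [hgdef] using (((hasDerivAt_id θ).const_mul 2).fun_sub ((Real.hasDerivAt_sin θ).const_mul x))
  have hgd : ∀ θ : ℝ, HasDerivAt g (x * Real.sin θ) θ := by
    intro θ
    have := ((Real.hasDerivAt_cos θ).const_mul x).const_sub 2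
    simpa [mul_comm] using this
  have hF : ∀ θ ∈ Set.uIcc a b,
      HasDerivAt (fun θ => Real.sin (2 * θ - x * Real.sin θ) / g θ)
        (Real.cos (2 * θ - x * Real.sin θ)
          - Real.sin (2 * θ - x * Real.sin θ) * (x * Real.sin θ) / (g θ) ^ 2) θ := by
    intro θ hθ
    rw [huIcc] at hθ
    have hgne := hg θ hθ
    have h2 : HasDerivAt (fun θ => Real.sin (2 * θ - x * Real.sin θ))
        (Real.cos (2 * θ - x * Real.sin θ) * g θ) θ := (hphi θ).sin
    have := h2.fun_div (hgd θ) hgne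
    refine this.congr_deriv ?_
    rw [sub_div, pow_two, mul_div_mul_right _ _ (show g θ ≠ 0 from hgne), mul_div_cancel_right₀ _ (show g θ ≠ 0 from hgne)]
  have hcontS : ContinuousOn (fun θ => Real.sin (2 * θ - x * Real.sin θ) * (x * Real.sin θ) / (g θ) ^ 2) (Set.uIcc a b) := by
    apply ContinuousOn.div
    · fun_prop
    · fun_prop
    · intro θ hθ
      rw [huIcc] at hθ
      exact pow_ne_zero _ (hg θ hθ)
  have hSi : IntervalIntegrable (fun θ => Real.sin (2 * θ - x * Real.sin θ) * (x * Real.sin θ) / (g θ) ^ 2) volume a b :=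
    hcontS.intervalIntegrable
  have hFi : IntervalIntegrable (fun θ => Real.cos (2 * θ - x * Real.sin θ)
      - Real.sin (2 * θ - x * Real.sin θ) * (x * Real.sin θ) / (g θ) ^ 2) volume a b := by
    apply ContinuousOn.intervalIntegrable
    exact (Continuous.continuousOn (by continuity)).sub hcontS
  have eqF := integral_eq_sub_of_hasDerivAt hF hFi
  -- G = -1/g
  have hG : ∀ θ ∈ Set.uIcc a b, HasDerivAt (fun θ => -(1 / g θ)) ((x * Real.sin θ) / (g θ) ^ 2) θ := by
    intro θ hθ
    rw [huIcc] at hθ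
    have hgne := hg θ hθ
    have := ((hasDerivAt_const θ (1:ℝ)).fun_div (hgd θ) hgne).fun_neg
    refine this.congr_deriv ?_
    ring
  have hGi : IntervalIntegrable (fun θ => (x * Real.sin θ) / (g θ) ^ 2) volume a b := by
    apply ContinuousOn.intervalIntegrable
    apply ContinuousOn.div
    · fun_prop
    · fun_prop
    · intro θ hθ
      rw [huIcc] at hθ
      exact pow_ne_zero _ (hg θ hθ)
  have eqG := integral_eq_sub_of_hasDerivAt hG hGi
  -- split
  have hsplit : (∫ θ in a..b, Real.cos (2 * θ - x * Real.sin θ)) =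
      (Real.sin (2 * b - x * Real.sin b) / g b - Real.sin (2 * a - x * Real.sin a) / g a)
      + ∫ θ in a..b, Real.sin (2 * θ - x * Real.sin θ) * (x * Real.sin θ) / (g θ) ^ 2 := by
    rw [← eqF, ← integral_add hFi hSi]
    apply integral_congr
    intro θ _
    ring
  -- bound the remainder integral
  have hSb : |∫ θ in a..b, Real.sin (2 * θ - x * Real.sin θ) * (x * Real.sin θ) / (g θ) ^ 2|
      ≤ ∫ θ in a..b, (x * Real.sin θ) / (g θ) ^ 2 := by
    calc |∫ θ in a..b, Real.sin (2 * θ - x * Real.sin θ) * (x * Real.sin θ) / (g θ) ^ 2|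
        ≤ ∫ θ in a..b, |Real.sin (2 * θ - x * Real.sin θ) * (x * Real.sin θ) / (g θ) ^ 2| :=
          abs_integral_le_integral_abs hab
      _ ≤ ∫ θ in a..b, (x * Real.sin θ) / (g θ) ^ 2 := by
          apply integral_mono_on hab hSi.abs hGi
          intro θ hθ
          have hs : 0 ≤ Real.sin θ := Real.sin_nonneg_of_nonneg_of_le_pi (ha.trans hθ.1) (hθ.2.trans hb)
          have h1 : |Real.sin (2 * θ - x * Real.sin θ) * (x * Real.sin θ) / (g θ) ^ 2|
              ≤ |(x * Real.sin θ) / (g θ) ^ 2| := by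
            rw [abs_div, abs_div, abs_mul, mul_div_assoc]
            exact mul_le_of_le_one_left (by positivity) (Real.abs_sin_le_one _)
          refine h1.trans (le_of_eq (abs_of_nonneg (by positivity)))
  rw [hsplit]; rw [eqG] at hSb
  have h2 : |Real.sin (2 * b - x * Real.sin b) / g b| ≤ 1 / |g b| := by
    rw [abs_div]
    gcongr
    exact Real.abs_sin_le_one _
  have h3 : |Real.sin (2 * a - x * Real.sin a) / g a| ≤ 1 / |g a| := by
    rw [abs_div]
    gcongr
    exact Real.abs_sin_le_one _
  have habs := abs_add_le (Real.sin (2 * b - x * Real.sin b) / g b - Real.sin (2 * a - x * Real.sin a) / g a)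
      (∫ θ in a..b, Real.sin (2 * θ - x * Real.sin θ) * (x * Real.sin θ) / (g θ) ^ 2)
  have habs2 := abs_sub (Real.sin (2 * b - x * Real.sin b) / g b) (Real.sin (2 * a - x * Real.sin a) / g a)
  have := habs.trans (by linarith : |Real.sin (2 * b - x * Real.sin b) / g b - Real.sin (2 * a - x * Real.sin a) / g a| + |∫ θ in a..b, Real.sin (2 * θ - x * Real.sin θ) * (x * Real.sin θ) / (g θ) ^ 2| ≤ (1 / |g b| + 1 / |g a|) + (-(1 / g b) - -(1 / g a)))
  refine this.trans (le_of_eq (by ring))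

open intervalIntegral in
lemma bessel_integral_bound {x : ℝ} (hx : 100 ≤ x) :
    |∫ θ in (0:ℝ)..π, Real.cos (2 * θ - x * Real.sin θ)| ≤ (26/3) / Real.sqrt x := by
  have hx0 : (0:ℝ) < x := by linarith
  set s := Real.sqrt x with hsdef
  have hs2 : s ^ 2 = x := Real.sq_sqrt hx0.le
  have hs0 : 0 < s := Real.sqrt_pos.mpr hx0
  have hs10 : 10 ≤ s := by nlinarith
  set δ : ℝ := 1 / s with hδdef
  have hδ0 : 0 < δ := by positivity
  have hδ1 : δ ≤ 1 / 10 := by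
    rw [hδdef]
    rw [div_le_div_iff₀ hs0 (by norm_num)]
    linarith
  clear_value s
  have hxδ : x * δ = s := by
    rw [hδdef]
    field_simp
    nlinarith
  clear_value δ
  set θ₀ := Real.arccos (2 / x) with hθ₀def
  have h2x1 : 2 / x ≤ 1 := by rw [div_le_one hx0]; linarith
  have h2x0 : 0 ≤ 2 / x := by positivity
  have hcos : Real.cos θ₀ = 2 / x := Real.cos_arccos (by linarith) h2x1
  have h2x : x * Real.cos θ₀ = 2 := by rw [hcos]; field_simp
  have hθle : θ₀ ≤ π / 2 := Real.arccos_le_pi_div_two.mpr h2x0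
  have hθ0 : 0 ≤ θ₀ := Real.arccos_nonneg _
  clear_value θ₀
  have hpi1 : (3.141592:ℝ) ≤ π := by linarith [Real.pi_gt_d6]
  have hpi2 : π ≤ 3.15 := by linarith [Real.pi_lt_d2]
  set t := π / 2 - θ₀ with htdef
  have ht0 : 0 ≤ t := by simp [htdef]; linarith
  clear_value t
  have hsint : Real.sin t = 2 / x := by rw [htdef, Real.sin_pi_div_two_sub, hcos]
  have htle : t ≤ π / x := by
    have h1 := Real.mul_le_sin ht0 (by simp [htdef]; linarith)
    rw [hsint, div_mul_eq_mul_div, div_le_div_iff₀ Real.pi_pos hx0] at h1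
    rw [le_div_iff₀ hx0]
    nlinarith [Real.pi_pos]
  have ht' : t ≤ 0.0315 := by
    refine htle.trans ?_
    rw [div_le_iff₀ hx0]; nlinarith
  -- θ₀ bounds
  have hθlow : 1.4 ≤ θ₀ := by rw [htdef] at ht'; linarith
  have h0a : 0 ≤ θ₀ - δ := by linarith
  have hbπ : θ₀ + δ ≤ π := by linarith
  -- sin(δ/2) lower bound
  have hsinhalf : 0.499 * δ ≤ Real.sin (δ / 2) := by
    have h := Real.sin_gt_sub_cube (by positivity : 0 < δ/2)
    have hδsq : δ^2 ≤ 1/100 := by nlinarith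
    nlinarith [h, hδsq, hδ0]
  have hsinhalf' : 0 ≤ Real.sin (δ / 2) := le_trans (by positivity) hsinhalf
  -- sin near θ₀ lower bounds
  have h99a : 0.99 ≤ Real.sin (θ₀ + δ / 2) := by
    have h := Real.one_sub_sq_div_two_le_cos (x := t - δ / 2)
    rw [show t - δ/2 = π/2 - (θ₀ + δ/2) by rw [htdef]; ring, Real.cos_pi_div_two_sub] at h
    nlinarith
  have h99b : 0.99 ≤ Real.sin (θ₀ - δ / 2) := by
    have h := Real.one_sub_sq_div_two_le_cos (x := t + δ / 2)
    rw [show t + δ/2 = π/2 - (θ₀ - δ/2) by rw [htdef]; ring, Real.cos_pi_div_two_sub] at h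
    nlinarith
  -- values of g at θ₀ ± δ
  have gval_a : 2 - x * Real.cos (θ₀ - δ) = -(x * (2 * Real.sin (θ₀ - δ/2) * Real.sin (δ/2))) := by
    have h1 : Real.cos θ₀ - Real.cos (θ₀ - δ) =
        -2 * Real.sin (θ₀ - δ/2) * Real.sin (δ/2) := by
      rw [Real.cos_sub_cos]
      congr 2 <;> ring
    nlinarith [h1, h2x]
  have gval_b : 2 - x * Real.cos (θ₀ + δ) = x * (2 * Real.sin (θ₀ + δ/2) * Real.sin (δ/2)) := by
    have h1 : Real.cos θ₀ - Real.cos (θ₀ + δ) =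
        2 * Real.sin (θ₀ + δ/2) * Real.sin (δ/2) := by
      rw [Real.cos_sub_cos]
      rw [show (θ₀ + (θ₀ + δ)) / 2 = θ₀ + δ/2 by ring, show (θ₀ - (θ₀ + δ)) / 2 = -(δ/2) by ring,
        Real.sin_neg]
      ring
    nlinarith [h1, h2x]
  have prod_lb : 0.9 * s ≤ x * (2 * Real.sin (θ₀ - δ/2) * Real.sin (δ/2)) ∧
      0.9 * s ≤ x * (2 * Real.sin (θ₀ + δ/2) * Real.sin (δ/2)) := by
    constructor
    · have p1 : (0.99 : ℝ) * (0.499 * δ) ≤ Real.sin (θ₀ - δ/2) * Real.sin (δ/2) :=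
        mul_le_mul h99b hsinhalf (by positivity) (by linarith [Real.sin_le_one (θ₀ - δ/2)])
      nlinarith [hxδ, hδ0, hx0]
    · have p1 : (0.99 : ℝ) * (0.499 * δ) ≤ Real.sin (θ₀ + δ/2) * Real.sin (δ/2) :=
        mul_le_mul h99a hsinhalf (by positivity) (by linarith [Real.sin_le_one (θ₀ + δ/2)])
      nlinarith [hxδ, hδ0, hx0]
  have bound_a : 2 - x * Real.cos (θ₀ - δ) ≤ -(0.9 * s) := by
    rw [gval_a]; linarith [prod_lb.1]
  have bound_b : 0.9 * s ≤ 2 - x * Real.cos (θ₀ + δ) := by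
    rw [gval_b]; exact prod_lb.2
  -- sign of g on the side intervals
  have hneg : ∀ θ ∈ Set.Icc (0:ℝ) (θ₀ - δ), 2 - x * Real.cos θ ≠ 0 := by
    intro θ hθ
    have hc : Real.cos (θ₀ - δ) ≤ Real.cos θ :=
      Real.cos_le_cos_of_nonneg_of_le_pi hθ.1 (by linarith) hθ.2
    have h := mul_le_mul_of_nonneg_left hc hx0.le
    exact ne_of_lt (by linarith)
  have hpos : ∀ θ ∈ Set.Icc (θ₀ + δ) π, 2 - x * Real.cos θ ≠ 0 := by
    intro θ hθ
    have hc : Real.cos θ ≤ Real.cos (θ₀ + δ) :=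
      Real.cos_le_cos_of_nonneg_of_le_pi (by linarith) hθ.2 hθ.1
    have h := mul_le_mul_of_nonneg_left hc hx0.le
    exact ne_of_gt (by linarith)
  -- the three pieces
  have B1 := side_bound hx0.le h0a le_rfl (by linarith) hneg
  have B3 := side_bound hx0.le (by linarith : θ₀ + δ ≤ π) (by linarith) le_rfl hpos
  -- numeric bounds for B1
  have hg0 : 2 - x * Real.cos 0 = 2 - x := by simp
  have hgπ : 2 - x * Real.cos π = 2 + x := by rw [Real.cos_pi]; ring
  rw [hg0] at B1
  rw [hgπ] at B3
  have hsx : 0.9 * s ≤ x - 2 := by nlinarith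
  have hB1 : |∫ θ in (0:ℝ)..(θ₀ - δ), Real.cos (2 * θ - x * Real.sin θ)| ≤ 10 / (3 * s) := by
    refine B1.trans ?_
    have e1 : |2 - x| = x - 2 := by rw [abs_of_nonpos (by linarith)]; ring
    have e2 : |2 - x * Real.cos (θ₀ - δ)| = -(2 - x * Real.cos (θ₀ - δ)) :=
      abs_of_nonpos (by linarith [bound_a, hs0])
    rw [e1, e2]
    have c1 : 1 / (x - 2) ≤ 1 / (0.9 * s) := by
      apply one_div_le_one_div_of_le (by positivity) hsx
    have c2 : 1 / -(2 - x * Real.cos (θ₀ - δ)) ≤ 1 / (0.9 * s) := by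
      apply one_div_le_one_div_of_le (by positivity) (by linarith)
    have c3 : 1 / (2 - x) - 1 / (2 - x * Real.cos (θ₀ - δ)) ≤ 1 / (0.9 * s) := by
      have d1 : 1 / (2 - x) ≤ 0 := by
        apply div_nonpos_of_nonneg_of_nonpos <;> [norm_num; linarith]
      have d2 : -(1 / (2 - x * Real.cos (θ₀ - δ))) = 1 / -(2 - x * Real.cos (θ₀ - δ)) := by
        rw [← one_div_neg_eq_neg_one_div]
      linarith [c2, d2 ▸ c2]
    have : (10:ℝ) / (3 * s) = 3 * (1 / (0.9 * s)) := by
      rw [mul_one_div, div_eq_div_iff (by positivity) (by positivity)]; ring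
    linarith
  have hB3 : |∫ θ in (θ₀ + δ)..π, Real.cos (2 * θ - x * Real.sin θ)| ≤ 10 / (3 * s) := by
    refine B3.trans ?_
    have e1 : |2 + x| = 2 + x := abs_of_nonneg (by linarith)
    have e2 : |2 - x * Real.cos (θ₀ + δ)| = 2 - x * Real.cos (θ₀ + δ) :=
      abs_of_nonneg (by linarith [bound_b, hs0])
    rw [e1, e2]
    have c1 : 1 / (2 + x) ≤ 1 / (0.9 * s) := by
      apply one_div_le_one_div_of_le (by positivity) (by linarith : 0.9 * s ≤ 2 + x)
    have c2 : 1 / (2 - x * Real.cos (θ₀ + δ)) ≤ 1 / (0.9 * s) := by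
      apply one_div_le_one_div_of_le (by positivity) bound_b
    have c3 : 1 / (2 - x * Real.cos (θ₀ + δ)) - 1 / (2 + x) ≤ 1 / (0.9 * s) := by
      have d1 : 0 ≤ 1 / (2 + x) := by positivity
      linarith
    have : (10:ℝ) / (3 * s) = 3 * (1 / (0.9 * s)) := by
      rw [mul_one_div, div_eq_div_iff (by positivity) (by positivity)]; ring
    linarith
  have hB2 : |∫ θ in (θ₀ - δ)..(θ₀ + δ), Real.cos (2 * θ - x * Real.sin θ)| ≤ 2 * δ := by
    have h : ‖∫ θ in (θ₀ - δ)..(θ₀ + δ), Real.cos (2 * θ - x * Real.sin θ)‖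
        ≤ 1 * |(θ₀ + δ) - (θ₀ - δ)| :=
      intervalIntegral.norm_integral_le_of_norm_le_const
        (fun θ _ => by rw [Real.norm_eq_abs]; exact Real.abs_cos_le_one _)
    have e : |(θ₀ + δ) - (θ₀ - δ)| = 2 * δ := by
      have e2 : (θ₀ + δ) - (θ₀ - δ) = 2 * δ := by ring
      rw [e2]
      exact abs_of_nonneg (mul_nonneg (by norm_num) hδ0.le)
    rw [Real.norm_eq_abs, one_mul, e] at h
    exact h
  -- splitting
  have hi : ∀ a b : ℝ, IntervalIntegrable (fun θ => Real.cos (2 * θ - x * Real.sin θ)) volume a b :=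
    fun a b => (Continuous.intervalIntegrable (by fun_prop) a b)
  have split1 := integral_add_adjacent_intervals (hi 0 (θ₀ - δ)) (hi (θ₀ - δ) (θ₀ + δ))
  have split2 := integral_add_adjacent_intervals (hi 0 (θ₀ + δ)) (hi (θ₀ + δ) π)
  have : (∫ θ in (0:ℝ)..π, Real.cos (2 * θ - x * Real.sin θ)) =
      (∫ θ in (0:ℝ)..(θ₀ - δ), Real.cos (2 * θ - x * Real.sin θ))
      + (∫ θ in (θ₀ - δ)..(θ₀ + δ), Real.cos (2 * θ - x * Real.sin θ))
      + (∫ θ in (θ₀ + δ)..π, Real.cos (2 * θ - x * Real.sin θ)) := by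
    rw [split1, split2]
  rw [this]
  have habs := abs_add_le ((∫ θ in (0:ℝ)..(θ₀ - δ), Real.cos (2 * θ - x * Real.sin θ))
      + (∫ θ in (θ₀ - δ)..(θ₀ + δ), Real.cos (2 * θ - x * Real.sin θ)))
      (∫ θ in (θ₀ + δ)..π, Real.cos (2 * θ - x * Real.sin θ))
  have habs2 := abs_add_le (∫ θ in (0:ℝ)..(θ₀ - δ), Real.cos (2 * θ - x * Real.sin θ))
      (∫ θ in (θ₀ - δ)..(θ₀ + δ), Real.cos (2 * θ - x * Real.sin θ))
  have hfin : 10 / (3*s) + 2*δ + 10/(3*s) = (26/3) / s := by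
    rw [hδdef]
    field_simp
    ring
  linarith [habs, habs2, hB1, hB2, hB3]

lemma besselJ_le_one (m : ℕ) (x : ℝ) : |besselJ m x| ≤ 1 := by
  rw [besselJ, abs_mul]
  have h : ‖∫ θ in (0:ℝ)..π, Real.cos (m * θ - x * Real.sin θ)‖ ≤ 1 * |π - 0| :=
    intervalIntegral.norm_integral_le_of_norm_le_const
      (fun θ _ => by rw [Real.norm_eq_abs]; exact Real.abs_cos_le_one _)
  rw [Real.norm_eq_abs, one_mul, sub_zero, abs_of_nonneg Real.pi_pos.le] at h
  have h2 : |1 / π| = 1 / π := abs_of_nonneg (by positivity)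
  rw [h2]
  rw [div_mul_eq_mul_div, mul_comm, ← div_mul_eq_mul_div]
  calc |∫ θ in (0:ℝ)..π, Real.cos (m * θ - x * Real.sin θ)| / π * 1
      ≤ π / π * 1 := by
        gcongr
    _ = 1 := by rw [div_self Real.pi_ne_zero, one_mul]

lemma besselJ_two_bound {x : ℝ} (hx : 0 < x) : |besselJ 2 x| ≤ 10 / Real.sqrt x := by
  have hs0 : 0 < Real.sqrt x := Real.sqrt_pos.mpr hx
  rcases le_or_gt 100 x with h | h
  · have hb := bessel_integral_bound h
    rw [besselJ, abs_mul, abs_of_nonneg (by positivity : (0:ℝ) ≤ 1/π)]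
    have e : ((2:ℕ):ℝ) = (2:ℝ) := by norm_num
    rw [e]
    have hπ : (3:ℝ) ≤ π := by linarith [Real.pi_gt_three]
    calc 1/π * |∫ θ in (0:ℝ)..π, Real.cos (2 * θ - x * Real.sin θ)|
        ≤ 1/3 * ((26/3) / Real.sqrt x) := by
          apply mul_le_mul _ hb (abs_nonneg _) (by norm_num)
          rw [div_le_div_iff₀ Real.pi_pos (by norm_num)]
          linarith
      _ ≤ 10 / Real.sqrt x := by
          rw [← mul_div_assoc]
          gcongr
          norm_num
  · have h1 := besselJ_le_one 2 x
    refine h1.trans ?_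
    rw [le_div_iff₀ hs0, one_mul]
    have : Real.sqrt x ≤ Real.sqrt 100 := Real.sqrt_le_sqrt h.le
    have e : Real.sqrt 100 = 10 := by
      rw [show (100:ℝ) = 10^2 by norm_num, Real.sqrt_sq (by norm_num)]
    linarith

noncomputable def emb (n : {n : ℤ × ℤ // n ≠ 0}) : Fin 2 → ℤ := ![n.1.1, n.1.2]

lemma emb_inj : Function.Injective emb := by
  intro a b h
  have h0 := congrFun h 0
  have h1 := congrFun h 1
  simp only [emb, Matrix.cons_val_zero, Matrix.cons_val_one, Matrix.head_cons] at h0 h1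
  exact Subtype.ext (Prod.ext h0 h1)

lemma one_le_znorm (n : {n : ℤ × ℤ // n ≠ 0}) : 1 ≤ znorm n.1 := by
  rw [znorm]
  rw [show (1:ℝ) = Real.sqrt 1 by simp]
  apply Real.sqrt_le_sqrt
  have hn := n.2
  rcases ne_or_eq n.1.1 0 with h | h
  · have h1 : (1:ℝ) ≤ |(n.1.1 : ℝ)| := by
      rw [← Int.cast_abs]
      exact_mod_cast Int.one_le_abs h
    nlinarith [sq_nonneg ((n.1.2 : ℝ)), abs_nonneg ((n.1.1 : ℝ)), sq_abs ((n.1.1:ℝ))]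
  · have h2 : n.1.2 ≠ 0 := by
      intro h2
      exact hn (Prod.ext h h2)
    have h1 : (1:ℝ) ≤ |(n.1.2 : ℝ)| := by
      rw [← Int.cast_abs]
      exact_mod_cast Int.one_le_abs h2
    nlinarith [sq_nonneg ((n.1.1 : ℝ)), abs_nonneg ((n.1.2 : ℝ)), sq_abs ((n.1.2:ℝ))]

lemma norm_emb_le (n : {n : ℤ × ℤ // n ≠ 0}) : ‖emb n‖ ≤ znorm n.1 := by
  rw [EisensteinSeries.norm_eq_max_natAbs, znorm]
  simp only [emb, Matrix.cons_val_zero, Matrix.cons_val_one, Matrix.head_cons]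
  rw [Nat.cast_max]
  have key : ∀ a b : ℤ, ((a.natAbs : ℝ)) ≤ Real.sqrt ((a:ℝ)^2 + (b:ℝ)^2) := by
    intro a b
    rw [Nat.cast_natAbs, Int.cast_abs, show |(a:ℝ)| = Real.sqrt ((a:ℝ)^2) from (Real.sqrt_sq_eq_abs _).symm]
    exact Real.sqrt_le_sqrt (by nlinarith [sq_nonneg ((b:ℝ))])
  apply max_le (key _ _) ?_
  have := key n.1.2 n.1.1
  rwa [add_comm] at this

lemma norm_emb_pos (n : {n : ℤ × ℤ // n ≠ 0}) : 0 < ‖emb n‖ := by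
  rw [norm_pos_iff]
  intro h
  have h0 := congrFun h 0
  have h1 := congrFun h 1
  simp only [emb, Matrix.cons_val_zero, Matrix.cons_val_one, Matrix.head_cons, Pi.zero_apply] at h0 h1
  exact n.2 (Prod.ext h0 h1)

lemma term_bound (R : ℝ) (hR : 0 < R) (n : {n : ℤ × ℤ // n ≠ 0}) :
    |(1 / (π * znorm n.1 ^ 2)) * besselJ 2 (znorm n.1 * Real.sqrt R)| ≤
      (10 / π) * Real.sqrt R ^ (-(1/2) : ℝ) * ‖emb n‖ ^ (-(5/2) : ℝ) := by
  have hz1 : 1 ≤ znorm n.1 := one_le_znorm n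
  have hz0 : 0 < znorm n.1 := lt_of_lt_of_le one_pos hz1
  have hsR : 0 < Real.sqrt R := Real.sqrt_pos.mpr hR
  set z := znorm n.1 with hzdef
  have hJ := besselJ_two_bound (mul_pos hz0 hsR)
  have habs : |(1 / (π * z ^ 2)) * besselJ 2 (z * Real.sqrt R)|
      = (1 / (π * z ^ 2)) * |besselJ 2 (z * Real.sqrt R)| := by
    rw [abs_mul, abs_of_nonneg (by positivity)]
  rw [habs]
  have h1 : (1 / (π * z ^ 2)) * |besselJ 2 (z * Real.sqrt R)|
      ≤ (1 / (π * z ^ 2)) * (10 / Real.sqrt (z * Real.sqrt R)) :=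
    mul_le_mul_of_nonneg_left hJ (by positivity)
  have heq : (1 / (π * z ^ 2)) * (10 / Real.sqrt (z * Real.sqrt R))
      = (10 / π) * Real.sqrt R ^ (-(1/2) : ℝ) * z ^ (-(5/2) : ℝ) := by
    rw [Real.sqrt_mul hz0.le, Real.sqrt_eq_rpow z, Real.sqrt_eq_rpow (Real.sqrt R)]
    rw [Real.rpow_neg (Real.sqrt_nonneg R), Real.rpow_neg hz0.le]
    rw [show (5/2:ℝ) = ((2:ℕ):ℝ) + 1/2 by norm_num, Real.rpow_add hz0, Real.rpow_natCast]
    have u1 : z ^ (1/(2:ℝ)) ≠ 0 := (Real.rpow_pos_of_pos hz0 _).ne'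
    have u2 : Real.sqrt R ^ (1/(2:ℝ)) ≠ 0 := (Real.rpow_pos_of_pos hsR _).ne'
    field_simp
  have h2 : z ^ (-(5/2) : ℝ) ≤ ‖emb n‖ ^ (-(5/2) : ℝ) :=
    Real.rpow_le_rpow_of_nonpos (norm_emb_pos n) (norm_emb_le n) (by norm_num)
  calc (1 / (π * z ^ 2)) * |besselJ 2 (z * Real.sqrt R)|
      ≤ (10 / π) * Real.sqrt R ^ (-(1/2) : ℝ) * z ^ (-(5/2) : ℝ) := heq ▸ h1
    _ ≤ (10 / π) * Real.sqrt R ^ (-(1/2) : ℝ) * ‖emb n‖ ^ (-(5/2) : ℝ) := by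
        apply mul_le_mul_of_nonneg_left h2 (by positivity)

lemma base_summable : Summable (fun x : Fin 2 → ℤ => ‖x‖ ^ (-(5/2) : ℝ)) :=
  EisensteinSeries.summable_one_div_norm_rpow (by norm_num)

lemma emb_summable : Summable (fun n : {n : ℤ × ℤ // n ≠ 0} => ‖emb n‖ ^ (-(5/2) : ℝ)) :=
  base_summable.comp_injective emb_inj

/-- For every `R > 0` the family `(1/(π‖n‖²)) J₂(‖n‖√R)`, indexed by nonzero lattice
points `n ∈ ℤ² \ {0}`, is absolutely summable, and there is a constant `C` such that
the sum of absolute values is at most `C·R^(-1/4)` for all `R ≥ 1`. -/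
theorem average_lattice_sum_absolutely_summable :
    (∀ R : ℝ, 0 < R →
      Summable (fun n : {n : ℤ × ℤ // n ≠ 0} =>
        |(1 / (π * znorm n.1 ^ 2)) * besselJ 2 (znorm n.1 * Real.sqrt R)|)) ∧
    ∃ C : ℝ, ∀ R : ℝ, 1 ≤ R →
      (∑' n : {n : ℤ × ℤ // n ≠ 0},
          |(1 / (π * znorm n.1 ^ 2)) * besselJ 2 (znorm n.1 * Real.sqrt R)|)
        ≤ C * R ^ (-(1/4) : ℝ) := by
  have hsumm : ∀ R : ℝ, 0 < R →
      Summable (fun n : {n : ℤ × ℤ // n ≠ 0} =>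
        |(1 / (π * znorm n.1 ^ 2)) * besselJ 2 (znorm n.1 * Real.sqrt R)|) := by
    intro R hR
    apply Summable.of_nonneg_of_le (fun n => abs_nonneg _) (term_bound R hR)
    exact (emb_summable.mul_left _)
  refine ⟨hsumm, ⟨(10 / π) * ∑' x : Fin 2 → ℤ, ‖x‖ ^ (-(5/2) : ℝ), ?_⟩⟩
  intro R hR
  have hR0 : 0 < R := lt_of_lt_of_le one_pos hR
  have hb : Summable (fun n : {n : ℤ × ℤ // n ≠ 0} =>
      (10 / π) * Real.sqrt R ^ (-(1/2) : ℝ) * ‖emb n‖ ^ (-(5/2) : ℝ)) :=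
    emb_summable.mul_left _
  have h1 := Summable.tsum_le_tsum (term_bound R hR0) (hsumm R hR0) hb
  rw [tsum_mul_left] at h1
  have h2 : (∑' n : {n : ℤ × ℤ // n ≠ 0}, ‖emb n‖ ^ (-(5/2) : ℝ))
      ≤ ∑' x : Fin 2 → ℤ, ‖x‖ ^ (-(5/2) : ℝ) :=
    Summable.tsum_le_tsum_of_inj emb emb_inj (fun c _ => Real.rpow_nonneg (norm_nonneg _) _)
      (fun n => le_rfl) emb_summable base_summable
  have hrpow : Real.sqrt R ^ (-(1/2) : ℝ) = R ^ (-(1/4) : ℝ) := by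
    rw [Real.sqrt_eq_rpow, ← Real.rpow_mul hR0.le]
    norm_num
  have hpos : (0 : ℝ) ≤ (10 / π) * Real.sqrt R ^ (-(1/2) : ℝ) := by positivity
  calc (∑' n : {n : ℤ × ℤ // n ≠ 0},
          |(1 / (π * znorm n.1 ^ 2)) * besselJ 2 (znorm n.1 * Real.sqrt R)|)
      ≤ (10 / π) * Real.sqrt R ^ (-(1/2) : ℝ) * ∑' n : {n : ℤ × ℤ // n ≠ 0}, ‖emb n‖ ^ (-(5/2) : ℝ) := h1
    _ ≤ (10 / π) * Real.sqrt R ^ (-(1/2) : ℝ) * ∑' x : Fin 2 → ℤ, ‖x‖ ^ (-(5/2) : ℝ) :=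
        mul_le_mul_of_nonneg_left h2 hpos
    _ = (10 / π) * (∑' x : Fin 2 → ℤ, ‖x‖ ^ (-(5/2) : ℝ)) * R ^ (-(1/4) : ℝ) := by
        rw [hrpow]; ring
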